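/- For every pattern σ ∈ S_k and every q > 0, the limit ρ(σ,q) = lim_{n→∞} P_n(σ,q)^{1/n} exists, and 0 ≤ ρ(σ,q) ≤ 1. -/

import Mathlib

open scoped Classical

/-- The q-integer `[k]_q = 1 + q + ... + q^(k-1)`. -/
noncomputable def qint (q : ℝ) (k : ℕ) : ℝ := ∑ i ∈ Finset.range k, q ^ i

/-- The q-factorial `[n]_q! = [1]_q [2]_q ⋯ [n]_q`. -/
noncomputable def qfact (q : ℝ) (n : ℕ) : ℝ := ∏ i ∈ Finset.range n, qint q (i + 1)

/-- The number of inversions of a permutation of `{0, ..., n-1}`. -/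
def inversions {n : ℕ} (π : Equiv.Perm (Fin n)) : ℕ :=
  (Finset.univ.filter (fun p : Fin n × Fin n => p.1 < p.2 ∧ π p.2 < π p.1)).card

/-- The pattern `σ ∈ S_m` occurs consecutively in `π ∈ S_n` starting at (0-indexed) position `j`:
the window `π_j, ..., π_{j+m-1}` is order-isomorphic to `σ`. -/
def occursAt {m n : ℕ} (σ : Equiv.Perm (Fin m)) (π : Equiv.Perm (Fin n)) (j : ℕ) : Prop :=
  ∃ h : j + m ≤ n, ∀ a b : Fin m,
    σ a < σ b ↔
      π ⟨j + (a : ℕ), lt_of_lt_of_le (Nat.add_lt_add_left a.isLt j) h⟩ <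
      π ⟨j + (b : ℕ), lt_of_lt_of_le (Nat.add_lt_add_left b.isLt j) h⟩

/-- `π` avoids `σ` as a consecutive pattern. -/
def avoids {m n : ℕ} (σ : Equiv.Perm (Fin m)) (π : Equiv.Perm (Fin n)) : Prop :=
  ∀ j : ℕ, ¬ occursAt σ π j

/-- `P_n(σ, q)`: the probability that a Mallows(q) random permutation of length `n`
avoids `σ` as a consecutive pattern. -/
noncomputable def Pn (m : ℕ) (σ : Equiv.Perm (Fin m)) (q : ℝ) (n : ℕ) : ℝ :=
  (∑ π ∈ Finset.univ.filter (fun π : Equiv.Perm (Fin n) => avoids σ π),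
    q ^ inversions π) / qfact q n

open Finset Equiv

def crossInv {N : ℕ} (S : Finset (Fin N)) : ℕ :=
  ∑ s ∈ S, (Sᶜ.filter (fun t => t < s)).card

lemma crossInv_eq_sum {N : ℕ} (S : Finset (Fin N)) :
    crossInv S = ∑ s ∈ S, ∑ t ∈ Sᶜ, if t < s then 1 else 0 := by
  unfold crossInv
  exact Finset.sum_congr rfl fun s _ => Finset.card_filter _ _

lemma inversions_eq_sum {n : ℕ} (ρ : Perm (Fin n)) :
    inversions ρ = ∑ x : Fin n, ∑ y : Fin n, if x < y ∧ ρ y < ρ x then 1 else 0 := by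
  rw [inversions, Finset.card_filter, ← Finset.univ_product_univ, Finset.sum_product]

section Psi
variable {a b : ℕ}

lemma card_compl_of {S : Finset (Fin (a + b))} (hS : S.card = a) : Sᶜ.card = b := by
  rw [Finset.card_compl, hS, Fintype.card_fin]; omega

noncomputable def psi (α : Perm (Fin a)) (β : Perm (Fin b)) (S : Finset (Fin (a + b)))
    (hS : S.card = a) : Perm (Fin (a + b)) :=
  finSumFinEquiv.symm.trans <|
    (Equiv.sumCongr (α.trans (S.orderIsoOfFin hS).toEquiv)
        (β.trans (Sᶜ.orderIsoOfFin (card_compl_of hS)).toEquiv)).trans <|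
      ((Equiv.refl _).sumCongr (Equiv.subtypeEquivRight fun x => Finset.mem_compl)).trans
        (Equiv.sumCompl (· ∈ S))

lemma psi_castAdd (α : Perm (Fin a)) (β : Perm (Fin b)) (S : Finset (Fin (a + b)))
    (hS : S.card = a) (i : Fin a) :
    psi α β S hS (Fin.castAdd b i) = ((S.orderIsoOfFin hS) (α i) : Fin (a + b)) := by
  simp [psi, finSumFinEquiv_symm_apply_castAdd]

lemma psi_natAdd (α : Perm (Fin a)) (β : Perm (Fin b)) (S : Finset (Fin (a + b)))
    (hS : S.card = a) (j : Fin b) :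
    psi α β S hS (Fin.natAdd a j) =
      ((Sᶜ.orderIsoOfFin (card_compl_of hS)) (β j) : Fin (a + b)) := by
  simp [psi, finSumFinEquiv_symm_apply_natAdd, Equiv.subtypeEquivRight]
  rfl

lemma inversions_psi (α : Perm (Fin a)) (β : Perm (Fin b)) (S : Finset (Fin (a + b)))
    (hS : S.card = a) :
    inversions (psi α β S hS) = inversions α + inversions β + crossInv S := by
  classical
  set eS := S.orderIsoOfFin hS with heS
  set eT := Sᶜ.orderIsoOfFin (card_compl_of hS) with heT
  set π := psi α β S hS with hπ
  have hL : ∀ i : Fin a, π (Fin.castAdd b i) = (eS (α i) : Fin (a + b)) := psi_castAdd α β S hS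
  have hR : ∀ j : Fin b, π (Fin.natAdd a j) = (eT (β j) : Fin (a + b)) := psi_natAdd α β S hS
  rw [inversions_eq_sum]
  rw [← Equiv.sum_comp (finSumFinEquiv (m := a) (n := b))
      (fun x => ∑ y : Fin (a + b), if x < y ∧ π y < π x then 1 else 0)]
  have inner : ∀ z : Fin a ⊕ Fin b,
      (∑ y : Fin (a + b), if finSumFinEquiv z < y ∧ π y < π (finSumFinEquiv z) then 1 else 0)
      = ∑ w : Fin a ⊕ Fin b, if finSumFinEquiv z < finSumFinEquiv w ∧
          π (finSumFinEquiv w) < π (finSumFinEquiv z) then 1 else 0 := fun z =>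
    (Equiv.sum_comp (finSumFinEquiv (m := a) (n := b))
      (fun y => if finSumFinEquiv z < y ∧ π y < π (finSumFinEquiv z) then 1 else 0)).symm
  rw [Finset.sum_congr rfl fun z _ => inner z]
  rw [Fintype.sum_sum_type]
  simp only [Fintype.sum_sum_type, finSumFinEquiv_apply_left, finSumFinEquiv_apply_right]
  rw [Finset.sum_add_distrib, Finset.sum_add_distrib]
  have blockLL : (∑ i : Fin a, ∑ i' : Fin a,
      if Fin.castAdd b i < Fin.castAdd b i' ∧ π (Fin.castAdd b i') < π (Fin.castAdd b i)
      then 1 else 0) = inversions α := by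
    rw [inversions_eq_sum]
    refine Finset.sum_congr rfl fun i _ => Finset.sum_congr rfl fun i' _ => ?_
    refine if_congr (and_congr ?_ ?_) rfl rfl
    · simp only [Fin.lt_def, Fin.coe_castAdd]
    · rw [hL, hL, Subtype.coe_lt_coe]; exact eS.lt_iff_lt
  have blockRR : (∑ j : Fin b, ∑ j' : Fin b,
      if Fin.natAdd a j < Fin.natAdd a j' ∧ π (Fin.natAdd a j') < π (Fin.natAdd a j)
      then 1 else 0) = inversions β := by
    rw [inversions_eq_sum]
    refine Finset.sum_congr rfl fun j _ => Finset.sum_congr rfl fun j' _ => ?_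
    refine if_congr (and_congr ?_ ?_) rfl rfl
    · simp only [Fin.lt_def, Fin.coe_natAdd]; omega
    · rw [hR, hR, Subtype.coe_lt_coe]; exact eT.lt_iff_lt
  have blockRL : (∑ j : Fin b, ∑ i : Fin a,
      if Fin.natAdd a j < Fin.castAdd b i ∧ π (Fin.castAdd b i) < π (Fin.natAdd a j)
      then 1 else 0) = 0 := by
    refine Finset.sum_eq_zero fun j _ => Finset.sum_eq_zero fun i _ => ?_
    rw [if_neg]
    rintro ⟨h1, -⟩
    rw [Fin.lt_def] at h1
    simp only [Fin.coe_natAdd, Fin.coe_castAdd] at h1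
    omega
  have blockLR : (∑ i : Fin a, ∑ j : Fin b,
      if Fin.castAdd b i < Fin.natAdd a j ∧ π (Fin.natAdd a j) < π (Fin.castAdd b i)
      then 1 else 0) = crossInv S := by
    have hcond : ∀ (i : Fin a) (j : Fin b),
        (Fin.castAdd b i < Fin.natAdd a j ∧ π (Fin.natAdd a j) < π (Fin.castAdd b i))
        ↔ ((eT (β j) : Fin (a + b)) < (eS (α i) : Fin (a + b))) := by
      intro i j
      rw [hL, hR]
      constructor
      · exact fun h => h.2
      · intro h
        refine ⟨?_, h⟩
        rw [Fin.lt_def]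
        simp only [Fin.coe_castAdd, Fin.coe_natAdd]
        have := i.isLt; omega
    calc (∑ i : Fin a, ∑ j : Fin b,
        if Fin.castAdd b i < Fin.natAdd a j ∧ π (Fin.natAdd a j) < π (Fin.castAdd b i)
        then 1 else 0)
        = ∑ i : Fin a, ∑ j : Fin b,
            if ((eT (β j) : Fin (a + b)) < (eS (α i) : Fin (a + b))) then 1 else 0 :=
          Finset.sum_congr rfl fun i _ => Finset.sum_congr rfl fun j _ =>
            if_congr (hcond i j) rfl rfl
      _ = ∑ i : Fin a, ∑ j : Fin b,
            if ((eT j : Fin (a + b)) < (eS i : Fin (a + b))) then 1 else 0 := by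
          rw [Equiv.sum_comp α (fun i => ∑ j : Fin b,
            if ((eT (β j) : Fin (a + b)) < (eS i : Fin (a + b))) then 1 else 0)]
          exact Finset.sum_congr rfl fun i _ => Equiv.sum_comp β
            (fun j => if ((eT j : Fin (a + b)) < (eS i : Fin (a + b))) then 1 else 0)
      _ = ∑ s : {x // x ∈ S}, ∑ t : {x // x ∈ Sᶜ},
            if ((t : Fin (a + b)) < (s : Fin (a + b))) then 1 else 0 := by
          refine Fintype.sum_bijective eS (EquivLike.bijective eS) _ _ fun i => ?_
          exact Fintype.sum_bijective eT (EquivLike.bijective eT) _ _ fun j => rfl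
      _ = ∑ s ∈ S, ∑ t ∈ Sᶜ, if t < s then 1 else 0 := by
          rw [Finset.sum_subtype S (fun x => Iff.rfl)
            (fun s => ∑ t ∈ Sᶜ, if t < s then 1 else 0)]
          exact Finset.sum_congr rfl fun s _ =>
            (Finset.sum_subtype Sᶜ (fun x => Iff.rfl) (fun t => if t < ↑s then 1 else 0)).symm
      _ = crossInv S := (crossInv_eq_sum S).symm
  refine Eq.trans (congrArg₂ HAdd.hAdd (congrArg₂ HAdd.hAdd blockLL blockLR)
    (congrArg₂ HAdd.hAdd blockRL blockRR)) ?_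
  omega

end Psi
section Psi2
variable {a b : ℕ}

lemma psi_mem_iff (α : Perm (Fin a)) (β : Perm (Fin b)) (S : Finset (Fin (a + b)))
    (hS : S.card = a) (x : Fin (a + b)) :
    x ∈ S ↔ ∃ i : Fin a, psi α β S hS (Fin.castAdd b i) = x := by
  constructor
  · intro hx
    refine ⟨α.symm ((S.orderIsoOfFin hS).symm ⟨x, hx⟩), ?_⟩
    rw [psi_castAdd]
    simp
  · rintro ⟨i, rfl⟩
    rw [psi_castAdd]
    exact ((S.orderIsoOfFin hS) (α i)).2

lemma psi_injective {α α' : Perm (Fin a)} {β β' : Perm (Fin b)} {S S' : Finset (Fin (a + b))}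
    (hS : S.card = a) (hS' : S'.card = a)
    (h : psi α β S hS = psi α' β' S' hS') : α = α' ∧ β = β' ∧ S = S' := by
  have hSS : S = S' := by
    ext x
    rw [psi_mem_iff α β S hS x, psi_mem_iff α' β' S' hS' x, h]
  subst hSS
  refine ⟨?_, ?_, rfl⟩
  · ext i
    have h1 := DFunLike.congr_fun h (Fin.castAdd b i)
    rw [psi_castAdd, psi_castAdd] at h1
    have h2 : (S.orderIsoOfFin hS) (α i) = (S.orderIsoOfFin hS') (α' i) := Subtype.ext h1
    have h3 : (S.orderIsoOfFin hS) (α i) = (S.orderIsoOfFin hS) (α' i) := h2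
    exact Fin.val_eq_of_eq ((EquivLike.injective _) h3)
  · ext j
    have h1 := DFunLike.congr_fun h (Fin.natAdd a j)
    rw [psi_natAdd, psi_natAdd] at h1
    have h2 : (Sᶜ.orderIsoOfFin (card_compl_of hS)) (β j)
        = (Sᶜ.orderIsoOfFin (card_compl_of hS')) (β' j) := Subtype.ext h1
    have h3 : (Sᶜ.orderIsoOfFin (card_compl_of hS)) (β j)
        = (Sᶜ.orderIsoOfFin (card_compl_of hS)) (β' j) := h2
    exact Fin.val_eq_of_eq ((EquivLike.injective _) h3)

/-- total version of `psi` -/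
noncomputable def psiTot (x : (Perm (Fin a) × Perm (Fin b)) × Finset (Fin (a + b))) :
    Perm (Fin (a + b)) :=
  if h : x.2.card = a then psi x.1.1 x.1.2 x.2 h else 1

/-- index set for the shuffle decomposition -/
noncomputable def TT (a b : ℕ) : Finset ((Perm (Fin a) × Perm (Fin b)) × Finset (Fin (a + b))) :=
  Finset.univ ×ˢ Finset.powersetCard a Finset.univ

lemma mem_TT_card {x : (Perm (Fin a) × Perm (Fin b)) × Finset (Fin (a + b))}
    (hx : x ∈ TT a b) : x.2.card = a := by
  rw [TT, Finset.mem_product] at hx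
  exact (Finset.mem_powersetCard_univ.mp hx.2)

lemma psiTot_injOn : Set.InjOn (psiTot (a := a) (b := b)) (TT a b) := by
  intro x hx y hy hxy
  have hx2 := mem_TT_card (Finset.mem_coe.mp hx)
  have hy2 := mem_TT_card (Finset.mem_coe.mp hy)
  rw [psiTot, psiTot, dif_pos hx2, dif_pos hy2] at hxy
  obtain ⟨h1, h2, h3⟩ := psi_injective hx2 hy2 hxy
  exact Prod.ext (Prod.ext h1 h2) h3

lemma card_TT : (TT a b).card = Fintype.card (Perm (Fin (a + b))) := by
  rw [TT, Finset.card_product, Finset.card_powersetCard]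
  simp only [Finset.card_univ, Fintype.card_prod, Fintype.card_perm, Fintype.card_fin]
  have h := Nat.choose_mul_factorial_mul_factorial (Nat.le_add_right a b)
  rw [Nat.add_sub_cancel_left] at h
  rw [← h]; ring

lemma psiTot_image : (TT a b).image psiTot = Finset.univ := by
  apply Finset.eq_univ_of_card
  rw [Finset.card_image_of_injOn psiTot_injOn, card_TT]

lemma psiTot_surjOn :
    Set.SurjOn (psiTot (a := a) (b := b)) (TT a b) (Finset.univ : Finset (Perm (Fin (a + b)))) := by
  intro π _
  rw [← Finset.coe_image, psiTot_image]
  exact Finset.mem_coe.mpr (Finset.mem_univ π)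

end Psi2
section Sums
variable {a b : ℕ} (q : ℝ)

/-- generic triple sum factorization -/
lemma sum_triple_factor {A B C : Type*} (s : Finset A) (t : Finset B) (u : Finset C)
    (f : A → ℝ) (g : B → ℝ) (h : C → ℝ) :
    ∑ x ∈ (s ×ˢ t) ×ˢ u, (f x.1.1 * g x.1.2 * h x.2)
      = (∑ x ∈ s, f x) * (∑ x ∈ t, g x) * (∑ x ∈ u, h x) := by
  rw [Finset.sum_product, Finset.sum_product, mul_assoc]
  simp_rw [mul_assoc, ← Finset.mul_sum, ← Finset.sum_mul]

lemma FF_factor :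
    (∑ π : Perm (Fin (a + b)), q ^ inversions π)
    = (∑ α : Perm (Fin a), q ^ inversions α) * (∑ β : Perm (Fin b), q ^ inversions β)
      * (∑ S ∈ Finset.powersetCard a (Finset.univ : Finset (Fin (a + b))), q ^ crossInv S) := by
  have main : (∑ x ∈ TT a b, q ^ (inversions x.1.1 + inversions x.1.2 + crossInv x.2))
      = ∑ π : Perm (Fin (a + b)), q ^ inversions π := by
    refine Finset.sum_nbij psiTot (fun x _ => Finset.mem_univ _) psiTot_injOn psiTot_surjOn ?_
    intro x hx
    rw [psiTot, dif_pos (mem_TT_card hx), inversions_psi]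
  rw [← main, TT, ← Finset.univ_product_univ]
  simp_rw [pow_add]
  exact sum_triple_factor Finset.univ Finset.univ (Finset.powersetCard a Finset.univ)
    (fun α => q ^ inversions α) (fun β => q ^ inversions β) (fun S => q ^ crossInv S)

variable {k : ℕ} (σ : Perm (Fin k))

lemma occursAt_psi_left {α : Perm (Fin a)} {β : Perm (Fin b)} {S : Finset (Fin (a + b))}
    {hS : S.card = a} {j : ℕ} (h : occursAt σ α j) : occursAt σ (psi α β S hS) j := by
  obtain ⟨hjk, hiff⟩ := h
  refine ⟨le_trans hjk (Nat.le_add_right a b), fun u v => ?_⟩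
  rw [hiff u v]
  have hu : j + (u : ℕ) < a := lt_of_lt_of_le (Nat.add_lt_add_left u.isLt j) hjk
  have hv : j + (v : ℕ) < a := lt_of_lt_of_le (Nat.add_lt_add_left v.isLt j) hjk
  have e : ∀ (w : Fin k) (hw : j + (w : ℕ) < a) (hw2 : j + (w : ℕ) < a + b),
      psi α β S hS ⟨j + w, hw2⟩ = ((S.orderIsoOfFin hS) (α ⟨j + w, hw⟩) : Fin (a + b)) := by
    intro w hw hw2
    have : (⟨j + (w : ℕ), hw2⟩ : Fin (a + b)) = Fin.castAdd b ⟨j + w, hw⟩ := rfl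
    rw [this, psi_castAdd]
  rw [e u hu _, e v hv _, Subtype.coe_lt_coe, OrderIso.lt_iff_lt]

lemma occursAt_psi_right {α : Perm (Fin a)} {β : Perm (Fin b)} {S : Finset (Fin (a + b))}
    {hS : S.card = a} {j : ℕ} (h : occursAt σ β j) : occursAt σ (psi α β S hS) (a + j) := by
  obtain ⟨hjk, hiff⟩ := h
  refine ⟨by omega, fun u v => ?_⟩
  rw [hiff u v]
  have hu : j + (u : ℕ) < b := lt_of_lt_of_le (Nat.add_lt_add_left u.isLt j) hjk
  have hv : j + (v : ℕ) < b := lt_of_lt_of_le (Nat.add_lt_add_left v.isLt j) hjk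
  have e : ∀ (w : Fin k) (hw : j + (w : ℕ) < b) (hw2 : a + j + (w : ℕ) < a + b),
      psi α β S hS ⟨a + j + w, hw2⟩
        = ((Sᶜ.orderIsoOfFin (card_compl_of hS)) (β ⟨j + w, hw⟩) : Fin (a + b)) := by
    intro w hw hw2
    have : (⟨a + j + (w : ℕ), hw2⟩ : Fin (a + b)) = Fin.natAdd a ⟨j + w, hw⟩ := by
      apply Fin.ext; simp [Fin.coe_natAdd]; omega
    rw [this, psi_natAdd]
  rw [e u hu _, e v hv _, Subtype.coe_lt_coe, OrderIso.lt_iff_lt]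

lemma AA_factor_le (hq : 0 < q) :
    (∑ π ∈ Finset.univ.filter (fun π : Perm (Fin (a + b)) => avoids σ π), q ^ inversions π)
    ≤ (∑ α ∈ Finset.univ.filter (fun α : Perm (Fin a) => avoids σ α), q ^ inversions α)
      * (∑ β ∈ Finset.univ.filter (fun β : Perm (Fin b) => avoids σ β), q ^ inversions β)
      * (∑ S ∈ Finset.powersetCard a (Finset.univ : Finset (Fin (a + b))), q ^ crossInv S) := by
  have main : (∑ π ∈ Finset.univ.filter (fun π : Perm (Fin (a + b)) => avoids σ π),
        q ^ inversions π)
      = ∑ x ∈ (TT a b).filter (fun x => avoids σ (psiTot x)),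
          q ^ (inversions x.1.1 + inversions x.1.2 + crossInv x.2) := by
    refine (Finset.sum_nbij psiTot ?_ ?_ ?_ ?_).symm
    · intro x hx
      rw [Finset.mem_filter] at hx ⊢
      exact ⟨Finset.mem_univ _, hx.2⟩
    · exact psiTot_injOn.mono (by exact_mod_cast Finset.filter_subset _ _)
    · intro π hπ
      rw [Finset.mem_coe, Finset.mem_filter] at hπ
      obtain ⟨x, hxT, hx⟩ := psiTot_surjOn (Finset.mem_coe.mpr (Finset.mem_univ π))
      refine ⟨x, ?_, hx⟩
      rw [Finset.mem_coe, Finset.mem_filter]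
      exact ⟨Finset.mem_coe.mp hxT, by rw [hx]; exact hπ.2⟩
    · intro x hx
      rw [Finset.mem_filter] at hx
      rw [psiTot, dif_pos (mem_TT_card hx.1), inversions_psi]
  rw [main]
  have hsub : (TT a b).filter (fun x => avoids σ (psiTot x)) ⊆
      ((Finset.univ.filter (fun α : Perm (Fin a) => avoids σ α))
        ×ˢ (Finset.univ.filter (fun β : Perm (Fin b) => avoids σ β)))
        ×ˢ Finset.powersetCard a Finset.univ := by
    intro x hx
    rw [Finset.mem_filter] at hx
    obtain ⟨hxT, hav⟩ := hx
    have hc := mem_TT_card hxT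
    rw [psiTot, dif_pos hc] at hav
    rw [Finset.mem_product, Finset.mem_product]
    refine ⟨⟨?_, ?_⟩, ?_⟩
    · rw [Finset.mem_filter]
      exact ⟨Finset.mem_univ _, fun j hocc => hav j (occursAt_psi_left σ hocc)⟩
    · rw [Finset.mem_filter]
      exact ⟨Finset.mem_univ _, fun j hocc => hav (a + j) (occursAt_psi_right σ hocc)⟩
    · rw [TT, Finset.mem_product] at hxT
      exact hxT.2
  calc (∑ x ∈ (TT a b).filter (fun x => avoids σ (psiTot x)),
        q ^ (inversions x.1.1 + inversions x.1.2 + crossInv x.2))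
      ≤ ∑ x ∈ ((Finset.univ.filter (fun α : Perm (Fin a) => avoids σ α))
          ×ˢ (Finset.univ.filter (fun β : Perm (Fin b) => avoids σ β)))
          ×ˢ Finset.powersetCard a Finset.univ,
          q ^ (inversions x.1.1 + inversions x.1.2 + crossInv x.2) :=
        Finset.sum_le_sum_of_subset_of_nonneg hsub (fun x _ _ => by positivity)
    _ = _ := by
        simp_rw [pow_add]
        exact sum_triple_factor _ _ (Finset.powersetCard a Finset.univ)
          (fun α => q ^ inversions α) (fun β => q ^ inversions β) (fun S => q ^ crossInv S)

end Sums
section QFact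
variable (q : ℝ)

/-- abbreviation for the full inversion generating sum -/
noncomputable def FFs (n : ℕ) : ℝ := ∑ π : Perm (Fin n), q ^ inversions π

lemma inversions_zero_of_le_one {n : ℕ} (hn : n ≤ 1) (π : Perm (Fin n)) : inversions π = 0 := by
  rw [inversions_eq_sum]
  refine Finset.sum_eq_zero fun x _ => Finset.sum_eq_zero fun y _ => ?_
  rw [if_neg]
  rintro ⟨h1, -⟩
  rw [Fin.lt_def] at h1
  have := x.isLt; have := y.isLt; omega

lemma FFs_zero : FFs q 0 = 1 := by
  rw [FFs]
  simp [inversions_zero_of_le_one (by norm_num : (0:ℕ) ≤ 1), Finset.card_univ,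
    Fintype.card_perm]

lemma FFs_one : FFs q 1 = 1 := by
  rw [FFs]
  simp [inversions_zero_of_le_one (le_refl 1), Finset.card_univ, Fintype.card_perm]

lemma crossInv_singleton {N : ℕ} (t : Fin N) : crossInv ({t} : Finset (Fin N)) = t.val := by
  rw [crossInv, Finset.sum_singleton]
  have h1 : ({t}ᶜ : Finset (Fin N)).filter (fun x => x < t)
      = Finset.univ.filter (fun x => x < t) := by
    ext x
    simp only [Finset.mem_filter, Finset.mem_compl, Finset.mem_singleton, Finset.mem_univ,
      true_and]
    exact ⟨fun h => h.2, fun h => ⟨ne_of_lt h, h⟩⟩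
  have h2 : Finset.univ.filter (fun x => x < t) = Finset.Iio t := by
    ext x; simp
  rw [h1, h2, Fin.card_Iio]

lemma W_one (n : ℕ) :
    (∑ S ∈ Finset.powersetCard 1 (Finset.univ : Finset (Fin (1 + n))), q ^ crossInv S)
      = qint q (1 + n) := by
  rw [Finset.powersetCard_one, Finset.sum_map]
  have : ∀ t : Fin (1 + n),
      q ^ crossInv ({t} : Finset (Fin (1 + n))) = q ^ (t : ℕ) := by
    intro t; rw [crossInv_singleton]
  simp only [Function.Embedding.coeFn_mk, this]
  rw [qint, ← Fin.sum_univ_eq_sum_range]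

lemma FFs_eq_qfact (n : ℕ) : FFs q n = qfact q n := by
  induction n with
  | zero => rw [FFs_zero, qfact]; simp
  | succ n ih =>
    have h1 := FF_factor (a := 1) (b := n) q
    rw [W_one] at h1
    have h2 : FFs q (n + 1) = FFs q (1 + n) := by rw [Nat.add_comm]
    have h3 : FFs q (1 + n) = FFs q 1 * FFs q n * qint q (1 + n) := h1
    rw [h2, h3, FFs_one, ih, one_mul, qfact, qfact, Finset.prod_range_succ,
      Nat.add_comm 1 n]

lemma qint_pos (hq : 0 < q) (m : ℕ) : 0 < qint q (m + 1) := by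
  rw [qint]
  refine Finset.sum_pos (fun i _ => by positivity) ⟨0, Finset.mem_range.mpr (by omega)⟩

lemma qfact_pos (hq : 0 < q) (n : ℕ) : 0 < qfact q n := by
  rw [qfact]
  exact Finset.prod_pos fun i _ => qint_pos q hq i

end QFact

section PnLemmas
variable {k : ℕ} (σ : Perm (Fin k)) (q : ℝ)

lemma Pn_nonneg (hq : 0 < q) (n : ℕ) : 0 ≤ Pn k σ q n := by
  rw [Pn]
  apply div_nonneg _ (qfact_pos q hq n).le
  exact Finset.sum_nonneg fun π _ => by positivity

lemma Pn_le_one (hq : 0 < q) (n : ℕ) : Pn k σ q n ≤ 1 := by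
  rw [Pn, div_le_one (qfact_pos q hq n)]
  calc (∑ π ∈ Finset.univ.filter (fun π : Perm (Fin n) => avoids σ π), q ^ inversions π)
      ≤ ∑ π : Perm (Fin n), q ^ inversions π :=
        Finset.sum_le_sum_of_subset_of_nonneg (Finset.filter_subset _ _)
          (fun _ _ _ => by positivity)
    _ = qfact q n := FFs_eq_qfact q n

lemma Pn_submult (hq : 0 < q) (a b : ℕ) :
    Pn k σ q (a + b) ≤ Pn k σ q a * Pn k σ q b := by
  have h' : FFs q (a + b) = FFs q a * FFs q b
      * (∑ S ∈ Finset.powersetCard a (Finset.univ : Finset (Fin (a + b))), q ^ crossInv S) :=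
    FF_factor q
  rw [FFs_eq_qfact, FFs_eq_qfact, FFs_eq_qfact] at h'
  have hqa := qfact_pos q hq a
  have hqb := qfact_pos q hq b
  have hqab := qfact_pos q hq (a + b)
  have hWpos : 0 < ∑ S ∈ Finset.powersetCard a (Finset.univ : Finset (Fin (a + b))),
      q ^ crossInv S := by
    have hW : (∑ S ∈ Finset.powersetCard a (Finset.univ : Finset (Fin (a + b))),
        q ^ crossInv S) = qfact q (a + b) / (qfact q a * qfact q b) := by
      rw [h']; field_simp
    rw [hW]; positivity
  have hA := AA_factor_le (a := a) (b := b) q σ hq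
  have e1 : Pn k σ q (a + b) = (∑ π ∈ Finset.univ.filter
      (fun π : Perm (Fin (a + b)) => avoids σ π), q ^ inversions π) / qfact q (a + b) := rfl
  have e2 : Pn k σ q a = (∑ π ∈ Finset.univ.filter
      (fun π : Perm (Fin a) => avoids σ π), q ^ inversions π) / qfact q a := rfl
  have e3 : Pn k σ q b = (∑ π ∈ Finset.univ.filter
      (fun π : Perm (Fin b) => avoids σ π), q ^ inversions π) / qfact q b := rfl
  rw [e1, e2, e3, div_mul_div_comm, div_le_div_iff₀ hqab (by positivity)]
  calc (∑ π ∈ Finset.univ.filter (fun π : Perm (Fin (a + b)) => avoids σ π), q ^ inversions π)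
        * (qfact q a * qfact q b)
      ≤ ((∑ π ∈ Finset.univ.filter (fun π : Perm (Fin a) => avoids σ π), q ^ inversions π)
          * (∑ π ∈ Finset.univ.filter (fun π : Perm (Fin b) => avoids σ π), q ^ inversions π)
          * (∑ S ∈ Finset.powersetCard a (Finset.univ : Finset (Fin (a + b))), q ^ crossInv S))
        * (qfact q a * qfact q b) := by
        refine mul_le_mul_of_nonneg_right hA (by positivity)
    _ = ((∑ π ∈ Finset.univ.filter (fun π : Perm (Fin a) => avoids σ π), q ^ inversions π)
          * (∑ π ∈ Finset.univ.filter (fun π : Perm (Fin b) => avoids σ π), q ^ inversions π))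
        * (qfact q a * qfact q b
          * (∑ S ∈ Finset.powersetCard a (Finset.univ : Finset (Fin (a + b))), q ^ crossInv S)) := by
        ring
    _ = ((∑ π ∈ Finset.univ.filter (fun π : Perm (Fin a) => avoids σ π), q ^ inversions π)
          * (∑ π ∈ Finset.univ.filter (fun π : Perm (Fin b) => avoids σ π), q ^ inversions π))
        * qfact q (a + b) := by rw [← h']

end PnLemmas
section Final
open Filter

variable {k : ℕ} (σ : Perm (Fin k)) (q : ℝ)

lemma Pn_zero_eq_one (hk : k ≠ 0) : Pn k σ q 0 = 1 := by
  have h1 : (Finset.univ.filter (fun π : Perm (Fin 0) => avoids σ π)) = Finset.univ := by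
    refine Finset.filter_true_of_mem fun π _ => ?_
    intro j hocc
    obtain ⟨hle, -⟩ := hocc
    omega
  rw [Pn, h1, qfact]
  simp [inversions_zero_of_le_one (by norm_num : (0:ℕ) ≤ 1), Finset.card_univ,
    Fintype.card_perm]

lemma Pn_one_eq_zero_k0 (σ0 : Perm (Fin 0)) : Pn 0 σ0 q 1 = 0 := by
  have h1 : (Finset.univ.filter (fun π : Perm (Fin 1) => avoids σ0 π)) = ∅ := by
    refine Finset.filter_false_of_mem fun π _ hav => ?_
    exact hav 0 ⟨by omega, fun a _ => a.elim0⟩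
  rw [Pn, h1, Finset.sum_empty, zero_div]

/-- the growth rate `ρ(σ,q) = lim_n P_n(σ,q)^{1/n}` exists and lies in `[0,1]`. -/
theorem growth_rate_exists (k : ℕ) (σ : Equiv.Perm (Fin k)) (q : ℝ) (hq : 0 < q) :
    ∃ ρ : ℝ, Filter.Tendsto (fun n : ℕ => (Pn k σ q n) ^ ((1 : ℝ) / n))
        Filter.atTop (nhds ρ) ∧ 0 ≤ ρ ∧ ρ ≤ 1 := by
  by_cases hzero : ∃ n0 : ℕ, 1 ≤ n0 ∧ Pn k σ q n0 = 0
  · obtain ⟨n0, hn0, hP0⟩ := hzero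
    refine ⟨0, ?_, le_refl 0, zero_le_one⟩
    have hev : ∀ n, n0 ≤ n → Pn k σ q n = 0 := by
      intro n hn
      have h1 : Pn k σ q n ≤ Pn k σ q n0 * Pn k σ q (n - n0) := by
        have h := Pn_submult σ q hq n0 (n - n0)
        rwa [Nat.add_sub_cancel' hn] at h
      have h2 := Pn_nonneg σ q hq n
      rw [hP0, zero_mul] at h1
      linarith
    have hevf : ∀ᶠ n : ℕ in atTop, (0 : ℝ) = (Pn k σ q n) ^ ((1 : ℝ) / n) := by
      filter_upwards [eventually_ge_atTop (max n0 1)] with n hn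
      rw [hev n (le_trans (le_max_left _ _) hn), Real.zero_rpow]
      exact one_div_ne_zero (Nat.cast_ne_zero.mpr (by omega))
    exact Filter.Tendsto.congr' hevf tendsto_const_nhds
  · push_neg at hzero
    have hk : k ≠ 0 := by
      intro hk0
      subst hk0
      exact hzero 1 (le_refl 1) (Pn_one_eq_zero_k0 q σ)
    have hP0 : Pn k σ q 0 = 1 := Pn_zero_eq_one σ q hk
    have hpos : ∀ n, 0 < Pn k σ q n := by
      intro n
      rcases Nat.eq_zero_or_pos n with rfl | hn
      · rw [hP0]; norm_num
      · exact lt_of_le_of_ne (Pn_nonneg σ q hq n) (Ne.symm (hzero n hn))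
    set u : ℕ → ℝ := fun n => Real.log (Pn k σ q n) with hu
    have hsub : Subadditive u := by
      intro m n
      have h1 := Pn_submult σ q hq m n
      have h2 : u (m + n) ≤ Real.log (Pn k σ q m * Pn k σ q n) := by
        rw [hu]
        exact (Real.log_le_log_iff (hpos (m + n)) (mul_pos (hpos m) (hpos n))).mpr h1
      rwa [Real.log_mul (ne_of_gt (hpos m)) (ne_of_gt (hpos n))] at h2
    have hunonpos : ∀ n, u n ≤ 0 := fun n =>
      Real.log_nonpos (hpos n).le (Pn_le_one σ q hq n)
    have hfn : ∀ n : ℕ, (Pn k σ q n) ^ ((1 : ℝ) / n) = Real.exp (u n / n) := by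
      intro n
      rw [Real.rpow_def_of_pos (hpos n), mul_one_div]
    by_cases hbdd : BddBelow (Set.range fun n : ℕ => u n / n)
    · refine ⟨Real.exp (hsub.lim), ?_, (Real.exp_pos _).le, ?_⟩
      · have h1 := hsub.tendsto_lim hbdd
        have h2 : Tendsto (fun n : ℕ => Real.exp (u n / n)) atTop (nhds (Real.exp hsub.lim)) :=
          (Real.continuous_exp.tendsto _).comp h1
        exact h2.congr fun n => (hfn n).symm
      · rw [Real.exp_le_one_iff]
        refine le_of_tendsto (hsub.tendsto_lim hbdd) ?_
        filter_upwards [eventually_ge_atTop 1] with n _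
        exact div_nonpos_iff.mpr (Or.inr ⟨hunonpos n, Nat.cast_nonneg n⟩)
    · refine ⟨0, ?_, le_refl 0, zero_le_one⟩
      have hbot : Tendsto (fun n : ℕ => u n / n) atTop atBot := by
        rw [tendsto_atBot]
        intro L
        obtain ⟨y, ⟨m, hym⟩, hyL⟩ : ∃ y ∈ Set.range (fun n : ℕ => u n / (n : ℝ)), y < min L 0 := by
          rcases not_bddBelow_iff.mp hbdd (min L 0) with ⟨y, hy, h⟩
          exact ⟨y, hy, h⟩
        have hm0 : m ≠ 0 := by
          rintro rfl
          simp only [Nat.cast_zero, div_zero] at hym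
          rw [← hym] at hyL
          have : min L 0 ≤ 0 := min_le_right _ _
          linarith
        have hlt : u m / m < L := by
          have hym' : u m / (m : ℝ) = y := hym
          rw [hym']
          exact lt_of_lt_of_le hyL (min_le_left _ _)
        exact (hsub.eventually_div_lt_of_div_lt hm0 hlt).mono fun p hp => hp.le
      have h2 : Tendsto (fun n : ℕ => Real.exp (u n / n)) atTop (nhds 0) :=
        Real.tendsto_exp_atBot.comp hbot
      exact h2.congr fun n => (hfn n).symm

end Final
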